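/- A 3×n binary matrix M has the consecutive ones property for rows if and only if it does not contain (as a submatrix, up to independent row and column permutations) the 3×3 matrix M_{I₁} = [[1,1,0],[0,1,1],[1,0,1]] nor the 3×4 matrix M_{III₁} = [[1,1,0,0],[0,1,1,0],[0,1,0,1]]. -/
import Mathlib


/-- The `true` entries of the row `v` occur consecutively. -/
def RowConsecutive {k : ℕ} (v : Fin k → Bool) : Prop :=
  ∃ a b : ℕ, ∀ j : Fin k, v j = true ↔ a ≤ (j : ℕ) ∧ (j : ℕ) ≤ b

/-- Consecutive ones property for rows. -/
def C1R {m k : ℕ} (M : Fin m → Fin k → Bool) : Prop :=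
  ∃ σ : Equiv.Perm (Fin k), ∀ i, RowConsecutive fun j => M i (σ j)

/-- `M` contains a configuration of `A` as a submatrix: some rows and columns of `M`
(in some order) form the matrix `A` up to row and column permutations. -/
def ContainsConfig {m n k l : ℕ} (M : Fin m → Fin n → Bool)
    (A : Fin k → Fin l → Bool) : Prop :=
  ∃ (r : Fin k ↪ Fin m) (c : Fin l ↪ Fin n), ∀ i j, M (r i) (c j) = A i j

/-- Tucker's forbidden matrix `M_{I₁}`. -/
def MI1 : Fin 3 → Fin 3 → Bool :=
  ![![true, true, false], ![false, true, true], ![true, false, true]]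

/-- Tucker's forbidden matrix `M_{III₁}`. -/
def MIII1 : Fin 3 → Fin 4 → Bool :=
  ![![true, true, false, false], ![false, true, true, false], ![false, true, false, true]]

/-! ### Auxiliary machinery -/

/-- Three-point characterization of rows whose true entries are consecutive. -/
def TP {k : ℕ} (v : Fin k → Bool) : Prop :=
  ∀ j1 j2 j3 : Fin k, j1 ≤ j2 → j2 ≤ j3 → v j1 = true → v j3 = true → v j2 = true

instance {k : ℕ} (v : Fin k → Bool) : Decidable (TP v) := by unfold TP; infer_instance

lemma rowConsecutive_iff_TP {k : ℕ} (v : Fin k → Bool) : RowConsecutive v ↔ TP v := by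
  constructor
  · rintro ⟨a, b, h⟩ j1 j2 j3 l12 l23 h1 h3
    rw [h] at h1 h3 ⊢
    have e12 : (j1 : ℕ) ≤ j2 := l12
    have e23 : (j2 : ℕ) ≤ j3 := l23
    omega
  · intro h
    by_cases he : ∃ j, v j = true
    · obtain ⟨j0, hj0⟩ := he
      set T : Finset (Fin k) := Finset.univ.filter (fun j => v j = true) with hT
      have hne : T.Nonempty := ⟨j0, by simp [hT, hj0]⟩
      refine ⟨T.min' hne, T.max' hne, fun j => ?_⟩
      constructor
      · intro hv
        have hj : j ∈ T := by simp [hT, hv]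
        exact ⟨Fin.le_def.mp (T.min'_le j hj), Fin.le_def.mp (T.le_max' j hj)⟩
      · rintro ⟨h1, h2⟩
        have hma : v (T.min' hne) = true := by
          have := T.min'_mem hne; simp [hT] at this; exact this
        have hmb : v (T.max' hne) = true := by
          have := T.max'_mem hne; simp [hT] at this; exact this
        exact h _ j _ (Fin.le_def.mpr h1) (Fin.le_def.mpr h2) hma hmb
    · push_neg at he
      exact ⟨1, 0, fun j => ⟨fun hv => absurd hv (by simp [he j]), fun ⟨h1, h2⟩ => by omega⟩⟩

/-- If the columns can be positioned so that each row is characterized by an interval of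
positions, then the matrix is C1R (sort the columns by position). -/
lemma sortC1R {m n : ℕ} (M : Fin m → Fin n → Bool) (pos : Fin n → ℕ) (a b : Fin m → ℕ)
    (h : ∀ j i, M i j = true ↔ a i ≤ pos j ∧ pos j ≤ b i) : C1R M := by
  refine ⟨Tuple.sort pos, fun i => (rowConsecutive_iff_TP _).mpr ?_⟩
  intro j1 j2 j3 l12 l23 h1 h3
  have mono := Tuple.monotone_sort pos
  have p12 : pos (Tuple.sort pos j1) ≤ pos (Tuple.sort pos j2) := mono l12
  have p23 : pos (Tuple.sort pos j2) ≤ pos (Tuple.sort pos j3) := mono l23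
  rw [h] at h1 h3 ⊢
  omega

/-- A submatrix (up to configurations) of a C1R matrix is C1R. -/
lemma subC1R {m n k l : ℕ} {M : Fin m → Fin n → Bool} {A : Fin k → Fin l → Bool}
    (hc : ContainsConfig M A) (h : C1R M) : C1R A := by
  obtain ⟨r, c, hrc⟩ := hc
  obtain ⟨σ, hσ⟩ := h
  choose a b hab using hσ
  refine sortC1R A (fun j' => ((σ.symm (c j') : Fin n) : ℕ))
    (fun i' => a (r i')) (fun i' => b (r i')) ?_
  intro j' i'
  rw [← hrc i' j']
  have := hab (r i') (σ.symm (c j'))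
  simpa using this

lemma not_C1R_MI1 : ¬ C1R MI1 := by
  rintro ⟨σ, h⟩
  have : ∃ σ : Equiv.Perm (Fin 3), ∀ i, TP (fun j => MI1 i (σ j)) :=
    ⟨σ, fun i => (rowConsecutive_iff_TP _).mp (h i)⟩
  exact absurd this (by decide)

lemma not_C1R_MIII1 : ¬ C1R MIII1 := by
  rintro ⟨σ, h⟩
  have : ∃ σ : Equiv.Perm (Fin 4), ∀ i, TP (fun j => MIII1 i (σ j)) :=
    ⟨σ, fun i => (rowConsecutive_iff_TP _).mp (h i)⟩
  exact absurd this (by decide)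

/-- `M` has no column equal to `t`. -/
def NoCol {n : ℕ} (M : Fin 3 → Fin n → Bool) (t : Fin 3 → Bool) : Prop :=
  ∀ j, ¬ ∀ i, M i j = t i

lemma C1R_of_perm {n : ℕ} (M : Fin 3 → Fin n → Bool) (π : Equiv.Perm (Fin 3))
    (h : C1R (fun i j => M (π i) j)) : C1R M := by
  obtain ⟨σ, hσ⟩ := h
  exact ⟨σ, fun i => by simpa using hσ (π.symm i)⟩

lemma noCol_perm {n : ℕ} {M : Fin 3 → Fin n → Bool} (π : Equiv.Perm (Fin 3))
    {t t' : Fin 3 → Bool} (ht : ∀ i, t' (π i) = t i) (h : NoCol M t') :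
    NoCol (fun i j => M (π i) j) t := by
  intro j hj
  refine h j fun i => ?_
  have h1 : M (π (π.symm i)) j = t (π.symm i) := hj (π.symm i)
  rw [π.apply_symm_apply] at h1
  rw [h1, ← ht (π.symm i), π.apply_symm_apply]

lemma pairs_missing {n : ℕ} {M : Fin 3 → Fin n → Bool} (h : ¬ ContainsConfig M MI1) :
    NoCol M ![true, true, false] ∨ NoCol M ![true, false, true] ∨ NoCol M ![false, true, true] := by
  by_contra hc
  simp only [NoCol] at hc
  push_neg at hc
  obtain ⟨h01, h02, h12⟩ := hc
  obtain ⟨j1, hj1⟩ := h01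
  obtain ⟨j0, hj0⟩ := h02
  obtain ⟨j2, hj2⟩ := h12
  have d01 : j0 ≠ j1 := by
    intro he; rw [he] at hj0
    exact absurd ((hj0 1).symm.trans (hj1 1)) (by decide)
  have d02 : j0 ≠ j2 := by
    intro he; rw [he] at hj0
    exact absurd ((hj0 0).symm.trans (hj2 0)) (by decide)
  have d12 : j1 ≠ j2 := by
    intro he; rw [he] at hj1
    exact absurd ((hj1 0).symm.trans (hj2 0)) (by decide)
  refine h ⟨Function.Embedding.refl _, ⟨![j0, j1, j2], ?_⟩, ?_⟩
  · intro a b hab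
    fin_cases a <;> fin_cases b <;> simp_all
  · intro i j
    fin_cases j
    · exact (hj0 i).trans (by fin_cases i <;> rfl)
    · exact (hj1 i).trans (by fin_cases i <;> rfl)
    · exact (hj2 i).trans (by fin_cases i <;> rfl)

lemma sing_missing {n : ℕ} {M : Fin 3 → Fin n → Bool} (h : ¬ ContainsConfig M MIII1) :
    NoCol M ![true, true, true] ∨ NoCol M ![true, false, false] ∨
    NoCol M ![false, true, false] ∨ NoCol M ![false, false, true] := by
  by_contra hc
  simp only [NoCol] at hc
  push_neg at hc
  obtain ⟨hf, h0, h1, h2⟩ := hc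
  obtain ⟨jf, hjf⟩ := hf
  obtain ⟨j0, hj0⟩ := h0
  obtain ⟨j1, hj1⟩ := h1
  obtain ⟨j2, hj2⟩ := h2
  have df0 : jf ≠ j0 := by
    intro he; rw [he] at hjf
    exact absurd ((hjf 1).symm.trans (hj0 1)) (by decide)
  have df1 : jf ≠ j1 := by
    intro he; rw [he] at hjf
    exact absurd ((hjf 0).symm.trans (hj1 0)) (by decide)
  have df2 : jf ≠ j2 := by
    intro he; rw [he] at hjf
    exact absurd ((hjf 0).symm.trans (hj2 0)) (by decide)
  have d01 : j0 ≠ j1 := by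
    intro he; rw [he] at hj0
    exact absurd ((hj0 0).symm.trans (hj1 0)) (by decide)
  have d02 : j0 ≠ j2 := by
    intro he; rw [he] at hj0
    exact absurd ((hj0 0).symm.trans (hj2 0)) (by decide)
  have d12 : j1 ≠ j2 := by
    intro he; rw [he] at hj1
    exact absurd ((hj1 1).symm.trans (hj2 1)) (by decide)
  refine h ⟨Function.Embedding.refl _, ⟨![j0, jf, j1, j2], ?_⟩, ?_⟩
  · intro a b hab
    fin_cases a <;> fin_cases b <;> simp_all
  · intro i j
    fin_cases j
    · exact (hj0 i).trans (by fin_cases i <;> rfl)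
    · exact (hjf i).trans (by fin_cases i <;> rfl)
    · exact (hj1 i).trans (by fin_cases i <;> rfl)
    · exact (hj2 i).trans (by fin_cases i <;> rfl)

/-! ### The three core constructions -/

def P1 : Bool → Bool → Bool → ℕ
  | true, false, false => 1
  | true, true, false => 2
  | false, true, false => 3
  | false, true, true => 4
  | false, false, true => 5
  | _, _, _ => 0

/-- Core case: no full column and no `{0,2}` column. Order: e0, p01, e1, p12, e2. -/
lemma core1 {n : ℕ} (M : Fin 3 → Fin n → Bool)
    (hf : NoCol M ![true, true, true]) (hp : NoCol M ![true, false, true]) : C1R M := by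
  refine sortC1R M (fun j => P1 (M 0 j) (M 1 j) (M 2 j)) ![1, 2, 4] ![2, 4, 5] ?_
  intro j i
  cases h0 : M 0 j <;> cases h1 : M 1 j <;> cases h2 : M 2 j
  · fin_cases i <;> simp_all [P1]
  · fin_cases i <;> simp_all [P1]
  · fin_cases i <;> simp_all [P1]
  · fin_cases i <;> simp_all [P1]
  · fin_cases i <;> simp_all [P1]
  · exact absurd (fun i => by fin_cases i <;> simp_all) (hp j)
  · fin_cases i <;> simp_all [P1]
  · exact absurd (fun i => by fin_cases i <;> simp_all) (hf j)

def P2a : Bool → Bool → Bool → ℕ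
  | true, false, false => 1
  | true, false, true => 2
  | true, true, true => 3
  | false, true, true => 4
  | false, true, false => 5
  | _, _, _ => 0

/-- Core case: no `{2}` column and no `{0,1}` column. Order: e0, p02, f, p12, e1. -/
lemma core2a {n : ℕ} (M : Fin 3 → Fin n → Bool)
    (he : NoCol M ![false, false, true]) (hp : NoCol M ![true, true, false]) : C1R M := by
  refine sortC1R M (fun j => P2a (M 0 j) (M 1 j) (M 2 j)) ![1, 3, 2] ![3, 5, 4] ?_
  intro j i
  cases h0 : M 0 j <;> cases h1 : M 1 j <;> cases h2 : M 2 j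
  · fin_cases i <;> simp_all [P2a]
  · exact absurd (fun i => by fin_cases i <;> simp_all) (he j)
  · fin_cases i <;> simp_all [P2a]
  · fin_cases i <;> simp_all [P2a]
  · fin_cases i <;> simp_all [P2a]
  · fin_cases i <;> simp_all [P2a]
  · exact absurd (fun i => by fin_cases i <;> simp_all) (hp j)
  · fin_cases i <;> simp_all [P2a]

def P2b : Bool → Bool → Bool → ℕ
  | false, true, false => 1
  | false, true, true => 2
  | true, true, true => 3
  | true, true, false => 4
  | true, false, false => 5
  | _, _, _ => 0

/-- Core case: no `{2}` column and no `{0,2}` column. Order: e1, p12, f, p01, e0. -/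
lemma core2b {n : ℕ} (M : Fin 3 → Fin n → Bool)
    (he : NoCol M ![false, false, true]) (hp : NoCol M ![true, false, true]) : C1R M := by
  refine sortC1R M (fun j => P2b (M 0 j) (M 1 j) (M 2 j)) ![3, 1, 2] ![5, 4, 3] ?_
  intro j i
  cases h0 : M 0 j <;> cases h1 : M 1 j <;> cases h2 : M 2 j
  · fin_cases i <;> simp_all [P2b]
  · exact absurd (fun i => by fin_cases i <;> simp_all) (he j)
  · fin_cases i <;> simp_all [P2b]
  · fin_cases i <;> simp_all [P2b]
  · fin_cases i <;> simp_all [P2b]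
  · exact absurd (fun i => by fin_cases i <;> simp_all) (hp j)
  · fin_cases i <;> simp_all [P2b]
  · fin_cases i <;> simp_all [P2b]

/-- The 3-cycle `0 ↦ 1 ↦ 2 ↦ 0` on `Fin 3`. -/
def cyc : Equiv.Perm (Fin 3) :=
  ⟨![1, 2, 0], ![2, 0, 1], by decide, by decide⟩

/-- Tucker's theorem for matrices with 3 rows: a `3 × n` binary matrix is C1R iff it
contains no configuration of `M_{I₁}` and no configuration of `M_{III₁}`. -/
theorem stmt19 (n : ℕ) (M : Fin 3 → Fin n → Bool) :
    C1R M ↔ ¬ ContainsConfig M MI1 ∧ ¬ ContainsConfig M MIII1 := by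
  constructor
  · intro h
    exact ⟨fun hc => not_C1R_MI1 (subC1R hc h), fun hc => not_C1R_MIII1 (subC1R hc h)⟩
  · rintro ⟨h1, h2⟩
    have hp := pairs_missing h1
    have hs := sing_missing h2
    rcases hs with hs | hs | hs | hs <;> rcases hp with hp | hp | hp
    -- full column missing
    · exact C1R_of_perm M (Equiv.swap 1 2)
        (core1 _ (noCol_perm _ (by decide) hs) (noCol_perm _ (by decide) hp))
    · exact C1R_of_perm M (Equiv.refl _)
        (core1 _ (noCol_perm _ (by decide) hs) (noCol_perm _ (by decide) hp))
    · exact C1R_of_perm M (Equiv.swap 0 1)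
        (core1 _ (noCol_perm _ (by decide) hs) (noCol_perm _ (by decide) hp))
    -- e0 missing
    · exact C1R_of_perm M cyc
        (core2b _ (noCol_perm _ (by decide) hs) (noCol_perm _ (by decide) hp))
    · exact C1R_of_perm M (Equiv.swap 0 2)
        (core2b _ (noCol_perm _ (by decide) hs) (noCol_perm _ (by decide) hp))
    · exact C1R_of_perm M (Equiv.swap 0 2)
        (core2a _ (noCol_perm _ (by decide) hs) (noCol_perm _ (by decide) hp))
    -- e1 missing
    · exact C1R_of_perm M (Equiv.swap 1 2)
        (core2b _ (noCol_perm _ (by decide) hs) (noCol_perm _ (by decide) hp))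
    · exact C1R_of_perm M (Equiv.swap 1 2)
        (core2a _ (noCol_perm _ (by decide) hs) (noCol_perm _ (by decide) hp))
    · exact C1R_of_perm M cyc.symm
        (core2b _ (noCol_perm _ (by decide) hs) (noCol_perm _ (by decide) hp))
    -- e2 missing
    · exact C1R_of_perm M (Equiv.refl _)
        (core2a _ (noCol_perm _ (by decide) hs) (noCol_perm _ (by decide) hp))
    · exact C1R_of_perm M (Equiv.refl _)
        (core2b _ (noCol_perm _ (by decide) hs) (noCol_perm _ (by decide) hp))
    · exact C1R_of_perm M (Equiv.swap 0 1)
        (core2b _ (noCol_perm _ (by decide) hs) (noCol_perm _ (by decide) hp))
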